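/- Let τ : {1,...,m} → [0,1] be a non-decreasing threshold function and h the corresponding step-up procedure (for fixed α). Then h is monotonic: for all p, q ∈ [0,1]^m with q ≤ p coordinatewise, h(p) ⊆ h(q). -/

import Mathlib

/-- The step-up procedure with threshold function `τ` (order statistics via
`Tuple.sort`; nothing rejected when no order statistic lies below its threshold). -/
def stepUp {m : ℕ} (τ : Fin m → ℝ) (p : Fin m → ℝ) : Set (Fin m) :=
  {i | ∃ j : Fin m, p (Tuple.sort p j) ≤ τ j ∧ p i ≤ p (Tuple.sort p j)}

private lemma card_subtype_perm {m : ℕ} (p : Fin m → ℝ) (t : ℝ) (σ : Equiv.Perm (Fin m)) :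
    Fintype.card {k // p (σ k) ≤ t} = Fintype.card {k // p k ≤ t} :=
  Fintype.card_congr (σ.subtypeEquiv (fun _ => Iff.rfl))

/-- Characterization of the step-up rejection set not referring to the sorting permutation. -/
private lemma mem_stepUp_iff {m : ℕ} (τ : Fin m → ℝ) (hτ : Monotone τ)
    (p : Fin m → ℝ) (i : Fin m) :
    i ∈ stepUp τ p ↔ ∃ j : Fin m, p i ≤ τ j ∧ (j : ℕ) < Fintype.card {k // p k ≤ τ j} := by
  set σ := Tuple.sort p with hσ
  have hg : Monotone (p ∘ σ) := Tuple.monotone_sort p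
  constructor
  · rintro ⟨j, hj, hij⟩
    refine ⟨j, hij.trans hj, ?_⟩
    rw [← card_subtype_perm p (τ j) σ]
    exact (show (j : ℕ) < Fintype.card {k // (p ∘ σ) k ≤ τ j} ↔ (p ∘ σ) j ≤ τ j by
      rw [Fintype.card_subtype]; exact Tuple.lt_card_le_iff_apply_le_of_monotone hg).2 hj
  · rintro ⟨j, hij, hcard⟩
    set c := Fintype.card {k // p k ≤ τ j} with hc
    have hcσ : Fintype.card {k // (p ∘ σ) k ≤ τ j} = c := card_subtype_perm p (τ j) σ
    have hcm : c ≤ m := by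
      rw [hc]
      calc Fintype.card {k // p k ≤ τ j} ≤ Fintype.card (Fin m) := Fintype.card_subtype_le _
        _ = m := Fintype.card_fin m
    have hc1 : 1 ≤ c := Nat.one_le_of_lt (Nat.lt_of_le_of_lt (Nat.zero_le _) hcard)
    have hclt : c - 1 < m := by omega
    set j' : Fin m := ⟨c - 1, hclt⟩ with hj'
    have hjj' : j ≤ j' := by
      rw [hj', Fin.le_def]
      simpa using Nat.le_sub_one_of_lt hcard
    have hgj' : (p ∘ σ) j' ≤ τ j := by
      rw [← (show (j' : ℕ) < Fintype.card {k // (p ∘ σ) k ≤ τ j} ↔ (p ∘ σ) j' ≤ τ j by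
        rw [Fintype.card_subtype]; exact Tuple.lt_card_le_iff_apply_le_of_monotone hg), hcσ]
      simp only [hj']
      omega
    -- the sorted position of i
    set i' : Fin m := σ.symm i with hi'
    have hgi' : (p ∘ σ) i' ≤ τ j := by
      simp only [Function.comp, hi', Equiv.apply_symm_apply]
      exact hij
    have hi'lt : (i' : ℕ) < c := by
      rw [← hcσ]
      exact (show (i' : ℕ) < Fintype.card {k // (p ∘ σ) k ≤ τ j} ↔ (p ∘ σ) i' ≤ τ j by
        rw [Fintype.card_subtype]; exact Tuple.lt_card_le_iff_apply_le_of_monotone hg).2 hgi'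
    have hi'j' : i' ≤ j' := by
      rw [Fin.le_def, hj']
      simpa using Nat.le_sub_one_of_lt hi'lt
    refine ⟨j', hgj'.trans (hτ hjj'), ?_⟩
    have : p i = (p ∘ σ) i' := by
      simp [hi', Function.comp]
    rw [this]
    exact hg hi'j'

/-- A step-up procedure with a non-decreasing threshold function is monotonic:
lowering p-values coordinatewise can only yield more rejections. -/
theorem stepUp_monotonic {m : ℕ} (τ : Fin m → ℝ) (hτ : Monotone τ)
    (hτr : ∀ i, τ i ∈ Set.Icc (0:ℝ) 1)
    (p q : Fin m → ℝ) (hp : ∀ i, p i ∈ Set.Icc (0:ℝ) 1)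
    (hq : ∀ i, q i ∈ Set.Icc (0:ℝ) 1) (hqp : ∀ i, q i ≤ p i) :
    stepUp τ p ⊆ stepUp τ q := by
  intro i hi
  rw [mem_stepUp_iff τ hτ p i] at hi
  rw [mem_stepUp_iff τ hτ q i]
  obtain ⟨j, hij, hcard⟩ := hi
  refine ⟨j, (hqp i).trans hij, lt_of_lt_of_le hcard ?_⟩
  exact Fintype.card_subtype_mono _ _ (fun k hk => (hqp k).trans hk)
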